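/- Let M, N, m be positive integers with m ≥ 2, and let ζ_1, …, ζ_{m−1} ∈ P^-_N(M). If (u_1, …, u_m) and (v_1, …, v_m), with all u_i, v_i ∈ P^+_N(M), are two (possibly identical) solutions of the system, then Σ_{i=1}^{m−1} ~u_i(z)·v_i(z) + u_m(z)·~v_m(z) ∈ P^-(M), i.e., all coefficients of this Laurent matrix polynomial at positive powers of z vanish. -/

import Mathlib

noncomputable section

/-- The type of `M × M` Laurent matrix polynomials over `ℂ`. -/
abbrev LMP (M : ℕ) := Matrix (Fin M) (Fin M) (LaurentPolynomial ℂ)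

/-- The adjoint of a scalar Laurent polynomial: `~p(z) = Σ conj(A_n) z^{-n}`. -/
def lpAdj (p : LaurentPolynomial ℂ) : LaurentPolynomial ℂ :=
  AddMonoidAlgebra.ofCoeff
    (Finsupp.equivMapDomain (Equiv.neg ℤ) (Finsupp.mapRange (starRingEnd ℂ) (map_zero _) p.coeff))

/-- The adjoint of a Laurent matrix polynomial: `~P(z) = Σ A_nᴴ z^{-n}`. -/
def adjM {n : Type*} (P : Matrix n n (LaurentPolynomial ℂ)) :
    Matrix n n (LaurentPolynomial ℂ) :=
  fun i j => lpAdj (P j i)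

/-- The coefficient of `z^n` of a Laurent matrix polynomial, an `M × M` complex matrix. -/
def coeffM {M : ℕ} (P : LMP M) (n : ℤ) : Matrix (Fin M) (Fin M) ℂ :=
  fun i j => (P i j).coeff n

/-- `P^+(M)`: Laurent matrix polynomials with vanishing coefficients at negative powers. -/
def Pplus (M : ℕ) : Set (LMP M) := {P | ∀ n : ℤ, n < 0 → coeffM P n = 0}

/-- `P^-(M)`: Laurent matrix polynomials with vanishing coefficients at positive powers. -/
def Pminus (M : ℕ) : Set (LMP M) := {P | ∀ n : ℤ, 0 < n → coeffM P n = 0}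

/-- `P^+_N(M)`: coefficients vanish unless `0 ≤ n ≤ N`. -/
def PplusN (M N : ℕ) : Set (LMP M) := {P | ∀ n : ℤ, (n < 0 ∨ (N : ℤ) < n) → coeffM P n = 0}

/-- `P^-_N(M)`: coefficients vanish unless `-N ≤ n ≤ 0`. -/
def PminusN (M N : ℕ) : Set (LMP M) := {P | ∀ n : ℤ, (n < -(N : ℤ) ∨ 0 < n) → coeffM P n = 0}

/-- `(x_1, …, x_{m-1}, x_m)` is a solution of the system (2.2). -/
def IsSolution (M N m : ℕ) (ζ : Fin (m - 1) → LMP M)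
    (x : Fin (m - 1) → LMP M) (xm : LMP M) : Prop :=
  (∀ j, x j ∈ PplusN M N) ∧ xm ∈ PplusN M N ∧
    (∀ j, xm * ζ j - adjM (x j) ∈ Pplus M) ∧
    ((∑ j, ζ j * x j) + adjM xm ∈ Pplus M)


section Aux

lemma lpAdj_apply (p : LaurentPolynomial ℂ) (n : ℤ) :
    (lpAdj p).coeff n = (starRingEnd ℂ) (p.coeff (-n)) := by
  simp [lpAdj, AddMonoidAlgebra.coeff_ofCoeff, Finsupp.equivMapDomain_apply, Finsupp.mapRange_apply]

lemma lpAdj_add (p q : LaurentPolynomial ℂ) : lpAdj (p + q) = lpAdj p + lpAdj q := by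
  ext n
  rw [show (lpAdj p + lpAdj q).coeff n = (lpAdj p).coeff n + (lpAdj q).coeff n from rfl, lpAdj_apply, lpAdj_apply,
    lpAdj_apply, show (p + q).coeff (-n) = p.coeff (-n) + q.coeff (-n) from rfl, map_add]

/-- `lpAdj` as an additive monoid homomorphism. -/
def lpAdjHom : LaurentPolynomial ℂ →+ LaurentPolynomial ℂ := AddMonoidHom.mk' lpAdj lpAdj_add

lemma lpAdj_sub (p q : LaurentPolynomial ℂ) : lpAdj (p - q) = lpAdj p - lpAdj q :=
  map_sub lpAdjHom p q

lemma lpAdj_sum {ι : Type*} (s : Finset ι) (f : ι → LaurentPolynomial ℂ) :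
    lpAdj (∑ i ∈ s, f i) = ∑ i ∈ s, lpAdj (f i) :=
  map_sum lpAdjHom f s

lemma lpAdj_lpAdj (p : LaurentPolynomial ℂ) : lpAdj (lpAdj p) = p := by
  ext n; simp [lpAdj_apply]

lemma lpAdj_single (a : ℤ) (b : ℂ) :
    lpAdj (AddMonoidAlgebra.single a b) = AddMonoidAlgebra.single (-a) ((starRingEnd ℂ) b) := by
  ext n
  simp only [lpAdj_apply, AddMonoidAlgebra.coeff_single, Finsupp.single_apply]
  rcases eq_or_ne a (-n) with h | h
  · simp [h]
  · rw [if_neg h, if_neg (by omega), map_zero]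

lemma lpAdj_mul (p q : LaurentPolynomial ℂ) : lpAdj (p * q) = lpAdj p * lpAdj q := by
  induction q using AddMonoidAlgebra.induction with
  | zero => simp [lpAdj, Finsupp.mapRange_zero]
  | single_add a b f _ _ ih =>
    rw [mul_add, lpAdj_add, lpAdj_add, ih, mul_add]
    congr 1
    rw [lpAdj_single]
    ext n
    rw [AddMonoidAlgebra.coeff_mul_single_apply, lpAdj_apply, AddMonoidAlgebra.coeff_mul_single_apply,
      lpAdj_apply, map_mul]
    ring_nf

lemma coeff_mul_eq_zero_of_neg (p q : LaurentPolynomial ℂ)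
    (hp : ∀ k : ℤ, k < 0 → p.coeff k = 0) (hq : ∀ k : ℤ, k < 0 → q.coeff k = 0)
    {n : ℤ} (hn : n < 0) : (p * q).coeff n = 0 := by
  rw [AddMonoidAlgebra.coeff_mul]
  refine Finset.sum_eq_zero fun a _ => Finset.sum_eq_zero fun b _ => ?_
  show (if a + b = n then p.coeff a * q.coeff b else 0) = 0
  split_ifs with h
  · rcases lt_or_ge a 0 with ha | ha
    · rw [hp a ha, zero_mul]
    · rw [hq b (by omega), mul_zero]
  · rfl

lemma adjM_add {M : ℕ} (P Q : LMP M) : adjM (P + Q) = adjM P + adjM Q := by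
  funext i j
  exact lpAdj_add (P j i) (Q j i)

lemma adjM_sub {M : ℕ} (P Q : LMP M) : adjM (P - Q) = adjM P - adjM Q := by
  funext i j
  exact lpAdj_sub (P j i) (Q j i)

lemma adjM_sum {M : ℕ} {ι : Type*} (s : Finset ι) (f : ι → LMP M) :
    adjM (∑ i ∈ s, f i) = ∑ i ∈ s, adjM (f i) := by
  funext i j
  show lpAdj ((∑ k ∈ s, f k) j i) = (∑ k ∈ s, adjM (f k)) i j
  rw [Matrix.sum_apply, Matrix.sum_apply, lpAdj_sum]
  rfl

lemma adjM_adjM {M : ℕ} (P : LMP M) : adjM (adjM P) = P := by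
  funext i j
  exact lpAdj_lpAdj (P i j)

lemma adjM_mul {M : ℕ} (P Q : LMP M) : adjM (P * Q) = adjM Q * adjM P := by
  funext i j
  show lpAdj ((P * Q) j i) = _
  rw [Matrix.mul_apply, Matrix.mul_apply, lpAdj_sum]
  exact Finset.sum_congr rfl fun k _ => by rw [lpAdj_mul, mul_comm]; rfl

lemma coeffM_eq_zero_iff {M : ℕ} (P : LMP M) (n : ℤ) :
    coeffM P n = 0 ↔ ∀ i j, (P i j).coeff n = 0 := by
  constructor
  · intro h i j
    exact congrFun (congrFun h i) j
  · intro h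
    funext i j
    exact h i j

lemma Pplus.add {M : ℕ} {P Q : LMP M} (hP : P ∈ Pplus M) (hQ : Q ∈ Pplus M) :
    P + Q ∈ Pplus M := by
  intro n hn
  rw [coeffM_eq_zero_iff]
  intro i j
  have h1 := (coeffM_eq_zero_iff P n).1 (hP n hn) i j
  have h2 := (coeffM_eq_zero_iff Q n).1 (hQ n hn) i j
  show (P i j + Q i j).coeff n = 0
  rw [show (P i j + Q i j).coeff n = (P i j).coeff n + (Q i j).coeff n from rfl, h1, h2, add_zero]

lemma Pplus.sum {M : ℕ} {ι : Type*} {s : Finset ι} {f : ι → LMP M}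
    (hf : ∀ i ∈ s, f i ∈ Pplus M) : (∑ i ∈ s, f i) ∈ Pplus M := by
  classical
  induction s using Finset.induction_on with
  | empty => intro n hn; funext i j; simp [coeffM]
  | @insert a s' hx ih =>
    rw [Finset.sum_insert hx]
    exact Pplus.add (hf a (Finset.mem_insert_self a s'))
      (ih fun i hi => hf i (Finset.mem_insert_of_mem hi))

lemma Pplus.mul {M : ℕ} {P Q : LMP M} (hP : P ∈ Pplus M) (hQ : Q ∈ Pplus M) :
    P * Q ∈ Pplus M := by
  intro n hn
  rw [coeffM_eq_zero_iff]
  intro i j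
  show ((P * Q) i j).coeff n = 0
  rw [Matrix.mul_apply]
  rw [show (∑ k, P i k * Q k j).coeff n = ∑ k, (P i k * Q k j).coeff n by
    rw [AddMonoidAlgebra.coeff_sum, Finsupp.finset_sum_apply]]
  refine Finset.sum_eq_zero fun k _ => ?_
  exact coeff_mul_eq_zero_of_neg _ _
    (fun m hm => (coeffM_eq_zero_iff P m).1 (hP m hm) i k)
    (fun m hm => (coeffM_eq_zero_iff Q m).1 (hQ m hm) k j) hn

lemma Pplus.sub {M : ℕ} {P Q : LMP M} (hP : P ∈ Pplus M) (hQ : Q ∈ Pplus M) :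
    P - Q ∈ Pplus M := by
  intro n hn
  rw [coeffM_eq_zero_iff]
  intro i j
  have h1 := (coeffM_eq_zero_iff P n).1 (hP n hn) i j
  have h2 := (coeffM_eq_zero_iff Q n).1 (hQ n hn) i j
  show (P i j - Q i j).coeff n = 0
  rw [show (P i j - Q i j).coeff n = (P i j).coeff n - (Q i j).coeff n from rfl, h1, h2, sub_zero]

lemma PplusN_subset {M N : ℕ} {P : LMP M} (hP : P ∈ PplusN M N) : P ∈ Pplus M :=
  fun n hn => hP n (Or.inl hn)

lemma adjM_mem_Pminus {M : ℕ} {P : LMP M} (hP : P ∈ Pplus M) : adjM P ∈ Pminus M := by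
  intro n hn
  rw [coeffM_eq_zero_iff]
  intro i j
  show (lpAdj (P j i)).coeff n = 0
  rw [lpAdj_apply, (coeffM_eq_zero_iff P (-n)).1 (hP (-n) (by omega)) j i, map_zero]

end Aux

/-- relation (3.4): for any two solutions `u`, `v` of the system,
`Σ_{i=1}^{m-1} ~u_i · v_i + u_m · ~v_m ∈ P^-(M)`. -/
theorem lemma_sum_mem_Pminus (M N m : ℕ) (hM : 0 < M) (hN : 0 < N) (hm : 2 ≤ m)
    (ζ : Fin (m - 1) → LMP M) (hζ : ∀ j, ζ j ∈ PminusN M N)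
    (u : Fin (m - 1) → LMP M) (um : LMP M)
    (v : Fin (m - 1) → LMP M) (vm : LMP M)
    (hu : IsSolution M N m ζ u um) (hv : IsSolution M N m ζ v vm) :
    (∑ i, adjM (u i) * v i) + um * adjM vm ∈ Pminus M := by
  obtain ⟨hu1, hu2, hu3, hu4⟩ := hu
  obtain ⟨hv1, hv2, hv3, hv4⟩ := hv
  set T : LMP M := vm * ((∑ j, ζ j * u j) + adjM um) - ∑ j, (vm * ζ j - adjM (v j)) * u j with hTdef
  have hT : T ∈ Pplus M :=
    Pplus.sub (Pplus.mul (PplusN_subset hv2) hu4)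
      (Pplus.sum fun j _ => Pplus.mul (hv3 j) (PplusN_subset (hu1 j)))
  have hT2 : T = (∑ j, adjM (v j) * u j) + vm * adjM um := by
    rw [hTdef]
    simp only [mul_add, Finset.mul_sum, sub_mul, Finset.sum_sub_distrib, mul_assoc]
    abel
  have key : (∑ i, adjM (u i) * v i) + um * adjM vm = adjM T := by
    rw [hT2, adjM_add, adjM_sum, adjM_mul]
    congr 1
    · refine Finset.sum_congr rfl fun j _ => ?_
      rw [adjM_mul, adjM_adjM]
    · rw [adjM_adjM]
  rw [key]
  exact adjM_mem_Pminus hT
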